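/- If b_1,...,b_s is a system of homogeneous generators of the hA-module hI, then gr(a(b_1)),...,gr(a(b_s)) is a system of generators of the gr(A)-module gr(I). -/

import Mathlib

/-- Generators of the Weyl algebra: `X i` and `D i`, `i < n`. -/
inductive WeylGen (n : ℕ) : Type
  | X : Fin n → WeylGen n
  | D : Fin n → WeylGen n

/-- The defining relations of the Weyl algebra:
`X_v X_w = X_w X_v`, `D_v D_w = D_w D_v`, `D_v X_v - X_v D_v = 1`,
`X_v D_w = D_w X_v` for `v ≠ w`. -/
inductive WeylRel (F : Type) [Field F] (n : ℕ) :
    FreeAlgebra F (WeylGen n) → FreeAlgebra F (WeylGen n) → Prop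
  | xx (v w : Fin n) : WeylRel F n
      (FreeAlgebra.ι F (WeylGen.X v) * FreeAlgebra.ι F (WeylGen.X w))
      (FreeAlgebra.ι F (WeylGen.X w) * FreeAlgebra.ι F (WeylGen.X v))
  | dd (v w : Fin n) : WeylRel F n
      (FreeAlgebra.ι F (WeylGen.D v) * FreeAlgebra.ι F (WeylGen.D w))
      (FreeAlgebra.ι F (WeylGen.D w) * FreeAlgebra.ι F (WeylGen.D v))
  | dx (v : Fin n) : WeylRel F n
      (FreeAlgebra.ι F (WeylGen.D v) * FreeAlgebra.ι F (WeylGen.X v))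
      (FreeAlgebra.ι F (WeylGen.X v) * FreeAlgebra.ι F (WeylGen.D v) + 1)
  | xd (v w : Fin n) (h : v ≠ w) : WeylRel F n
      (FreeAlgebra.ι F (WeylGen.X v) * FreeAlgebra.ι F (WeylGen.D w))
      (FreeAlgebra.ι F (WeylGen.D w) * FreeAlgebra.ι F (WeylGen.X v))

/-- The Weyl algebra `A = F[X_1,…,X_n,D_1,…,D_n]`. -/
abbrev Weyl (F : Type) [Field F] (n : ℕ) := RingQuot (WeylRel F n)

noncomputable def wX (F : Type) [Field F] (n : ℕ) (i : Fin n) : Weyl F n :=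
  RingQuot.mkAlgHom F (WeylRel F n) (FreeAlgebra.ι F (WeylGen.X i))

noncomputable def wD (F : Type) [Field F] (n : ℕ) (i : Fin n) : Weyl F n :=
  RingQuot.mkAlgHom F (WeylRel F n) (FreeAlgebra.ι F (WeylGen.D i))

/-- The monomial `X_1^{i_1} ⋯ X_n^{i_n} D_1^{j_1} ⋯ D_n^{j_n}`. -/
noncomputable def wMon (F : Type) [Field F] (n : ℕ) (i j : Fin n → ℕ) : Weyl F n :=
  (List.ofFn fun k => wX F n k ^ i k).prod * (List.ofFn fun k => wD F n k ^ j k).prod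

/-- The image of a generator in the Weyl algebra. -/
noncomputable def wGen (F : Type) [Field F] (n : ℕ) (g : WeylGen n) : Weyl F n :=
  RingQuot.mkAlgHom F (WeylRel F n) (FreeAlgebra.ι F g)

/-- The product of a word in the generators of `A`. -/
noncomputable def wOfList (F : Type) [Field F] (n : ℕ) (w : List (WeylGen n)) : Weyl F n :=
  (w.map (wGen F n)).prod

/-- The filtration of `A` by degree: `A_m` is spanned by products of at most `m`
generators. -/
noncomputable def wFil (F : Type) [Field F] (n : ℕ) (m : ℕ) : Submodule F (Weyl F n) :=
  Submodule.span F {x | ∃ w : List (WeylGen n), w.length ≤ m ∧ x = wOfList F n w}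

/-- The degree of an element of `A` (the least `m` with `z ∈ A_m`). -/
noncomputable def wDeg (F : Type) [Field F] (n : ℕ) (z : Weyl F n) : ℕ :=
  sInf {m | z ∈ wFil F n m}

/-- Generators of the homogenized Weyl algebra: `X0`, `X i`, `D i`. -/
inductive HGen (n : ℕ) : Type
  | X0 : HGen n
  | X : Fin n → HGen n
  | D : Fin n → HGen n

/-- Defining relations of the homogenized Weyl algebra `hA`:
all `X`'s commute, all `D`'s commute, `D_v X_v - X_v D_v = X_0^2`,
`X_v D_w = D_w X_v` for `v ≠ w`, and `X_0` is central. -/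
inductive HRel (F : Type) [Field F] (n : ℕ) :
    FreeAlgebra F (HGen n) → FreeAlgebra F (HGen n) → Prop
  | xx (v w : Fin n) : HRel F n
      (FreeAlgebra.ι F (HGen.X v) * FreeAlgebra.ι F (HGen.X w))
      (FreeAlgebra.ι F (HGen.X w) * FreeAlgebra.ι F (HGen.X v))
  | dd (v w : Fin n) : HRel F n
      (FreeAlgebra.ι F (HGen.D v) * FreeAlgebra.ι F (HGen.D w))
      (FreeAlgebra.ι F (HGen.D w) * FreeAlgebra.ι F (HGen.D v))
  | dx (v : Fin n) : HRel F n
      (FreeAlgebra.ι F (HGen.D v) * FreeAlgebra.ι F (HGen.X v))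
      (FreeAlgebra.ι F (HGen.X v) * FreeAlgebra.ι F (HGen.D v) +
        FreeAlgebra.ι F (HGen.X0 : HGen n) * FreeAlgebra.ι F (HGen.X0 : HGen n))
  | xd (v w : Fin n) (h : v ≠ w) : HRel F n
      (FreeAlgebra.ι F (HGen.X v) * FreeAlgebra.ι F (HGen.D w))
      (FreeAlgebra.ι F (HGen.D w) * FreeAlgebra.ι F (HGen.X v))
  | x0x (v : Fin n) : HRel F n
      (FreeAlgebra.ι F (HGen.X0 : HGen n) * FreeAlgebra.ι F (HGen.X v))
      (FreeAlgebra.ι F (HGen.X v) * FreeAlgebra.ι F (HGen.X0 : HGen n))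
  | x0d (v : Fin n) : HRel F n
      (FreeAlgebra.ι F (HGen.X0 : HGen n) * FreeAlgebra.ι F (HGen.D v))
      (FreeAlgebra.ι F (HGen.D v) * FreeAlgebra.ι F (HGen.X0 : HGen n))

/-- The homogenized Weyl algebra `hA = F[X_0,X_1,…,X_n,D_1,…,D_n]`. -/
abbrev HWeyl (F : Type) [Field F] (n : ℕ) := RingQuot (HRel F n)

noncomputable def hX0 (F : Type) [Field F] (n : ℕ) : HWeyl F n :=
  RingQuot.mkAlgHom F (HRel F n) (FreeAlgebra.ι F (HGen.X0 : HGen n))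

noncomputable def hXv (F : Type) [Field F] (n : ℕ) (i : Fin n) : HWeyl F n :=
  RingQuot.mkAlgHom F (HRel F n) (FreeAlgebra.ι F (HGen.X i))

noncomputable def hDv (F : Type) [Field F] (n : ℕ) (i : Fin n) : HWeyl F n :=
  RingQuot.mkAlgHom F (HRel F n) (FreeAlgebra.ι F (HGen.D i))

/-- The monomial `X_0^{i_0} X_1^{i_1} ⋯ X_n^{i_n} D_1^{j_1} ⋯ D_n^{j_n}` in `hA`. -/
noncomputable def hMon (F : Type) [Field F] (n : ℕ) (i0 : ℕ) (i j : Fin n → ℕ) :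
    HWeyl F n :=
  hX0 F n ^ i0 * (List.ofFn fun k => hXv F n k ^ i k).prod *
    (List.ofFn fun k => hDv F n k ^ j k).prod

/-- The image of a generator in `hA`. -/
noncomputable def hGen (F : Type) [Field F] (n : ℕ) (g : HGen n) : HWeyl F n :=
  RingQuot.mkAlgHom F (HRel F n) (FreeAlgebra.ι F g)

/-- The product of a word in the generators of `hA`. -/
noncomputable def hOfList (F : Type) [Field F] (n : ℕ) (w : List (HGen n)) : HWeyl F n :=
  (w.map (hGen F n)).prod

/-- The embedding of Weyl generators into the generators of `hA`. -/
def embGen (n : ℕ) : WeylGen n → HGen n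
  | WeylGen.X i => HGen.X i
  | WeylGen.D i => HGen.D i

/-- The value in `A` of a finite sum of terms: each term is a scalar together with a
word in the generators. -/
noncomputable def wRep (F : Type) [Field F] (n : ℕ)
    (L : List (F × List (WeylGen n))) : Weyl F n :=
  (L.map fun t => t.1 • wOfList F n t.2).sum

/-- The homogenization (relative to a target degree `d`) of a sum of terms:
`Σ_j z_j ↦ Σ_j z_j X_0^{d - deg z_j}`. -/
noncomputable def hRep (F : Type) [Field F] (n : ℕ)
    (L : List (F × List (WeylGen n))) (d : ℕ) : HWeyl F n :=
  (L.map fun t =>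
    t.1 • (hX0 F n ^ (d - t.2.length) * hOfList F n (t.2.map (embGen n)))).sum

/-- `ord_{X_0} z`: the largest `μ` with `z ∈ X_0^μ · hA`. -/
noncomputable def ordX0 (F : Type) [Field F] (n : ℕ) (z : HWeyl F n) : ℕ :=
  sSup {μ : ℕ | ∃ w : HWeyl F n, z = hX0 F n ^ μ * w}

open scoped BigOperators

/-- The `m`-th homogeneous component of `hA`. -/
noncomputable def hComp (F : Type) [Field F] (n : ℕ) (m : ℕ) : Submodule F (HWeyl F n) :=
  Submodule.span F
    {x | ∃ i0 : ℕ, ∃ i j : Fin n → ℕ,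
      i0 + (∑ k, i k) + (∑ k, j k) = m ∧ x = hMon F n i0 i j}

/-- `hfun : A → hA` is the homogenization map iff it is computed by
`Σ_j z_j ↦ Σ_j z_j X_0^{deg z - deg z_j}` on any representation of `z` as a sum of
terms of degrees at most `deg z`. -/
def IsHomogenization (F : Type) [Field F] (n : ℕ) (hfun : Weyl F n → HWeyl F n) : Prop :=
  ∀ z : Weyl F n, ∀ L : List (F × List (WeylGen n)),
    wRep F n L = z → (∀ t ∈ L, t.2.length ≤ wDeg F n z) →
    hfun z = hRep F n L (wDeg F n z)

/-- The degree of a vector: the maximum of the degrees of its components. -/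
noncomputable def wDegVec (F : Type) [Field F] (n l : ℕ) (z : Fin l → Weyl F n) : ℕ :=
  Finset.univ.sup fun i => wDeg F n (z i)

/-- The homogenization of a vector:
`h z = (h(z_1) X_0^{deg z - deg z_1}, …, h(z_l) X_0^{deg z - deg z_l})`. -/
noncomputable def hVec (F : Type) [Field F] (n l : ℕ) (hfun : Weyl F n → HWeyl F n)
    (z : Fin l → Weyl F n) : Fin l → HWeyl F n :=
  fun i => hfun (z i) * hX0 F n ^ (wDegVec F n l z - wDeg F n (z i))

/-- The homogenization `hI` of a submodule `I ⊆ A^l`: the least `F`-linear subspace of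
`hA^l` containing all `h z`, `z ∈ I`. -/
noncomputable def hImod (F : Type) [Field F] (n l : ℕ) (hfun : Weyl F n → HWeyl F n)
    (I : Submodule (Weyl F n) (Fin l → Weyl F n)) : Submodule F (Fin l → HWeyl F n) :=
  Submodule.span F {x | ∃ z ∈ I, x = hVec F n l hfun z}

/-- `(hA^l)_m`: vectors all of whose components are homogeneous of degree `m`. -/
noncomputable def hPil (F : Type) [Field F] (n l : ℕ) (m : ℕ) :
    Submodule F (Fin l → HWeyl F n) :=
  Submodule.pi Set.univ fun _ => hComp F n m

/-- `A_m^l`. -/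
noncomputable def Aml (F : Type) [Field F] (n l : ℕ) (m : ℕ) :
    Submodule F (Fin l → Weyl F n) :=
  Submodule.pi Set.univ fun _ => wFil F n m

/-- `I_m = I ∩ A_m^l` as an `F`-subspace. -/
noncomputable def Ifil (F : Type) [Field F] (n l : ℕ)
    (I : Submodule (Weyl F n) (Fin l → Weyl F n)) (m : ℕ) :
    Submodule F (Fin l → Weyl F n) :=
  I.restrictScalars F ⊓ Aml F n l m

/-- `(hI)_m`: the `m`-th homogeneous component of `hI`. -/
noncomputable def hIfil (F : Type) [Field F] (n l : ℕ) (hfun : Weyl F n → HWeyl F n)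
    (I : Submodule (Weyl F n) (Fin l → Weyl F n)) (m : ℕ) :
    Submodule F (Fin l → HWeyl F n) :=
  hImod F n l hfun I ⊓ hPil F n l m

/-- Componentwise dehomogenization `hA^l → A^l` as an `F`-linear map. -/
noncomputable def aLin (F : Type) [Field F] (n l : ℕ) (a : HWeyl F n →ₐ[F] Weyl F n) :
    (Fin l → HWeyl F n) →ₗ[F] (Fin l → Weyl F n) :=
  LinearMap.pi fun i => a.toLinearMap.comp (LinearMap.proj i)

/-- `I_{m-1}` with the convention `I_{-1} = 0`. -/
noncomputable def IfilPrev (F : Type) [Field F] (n l : ℕ)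
    (I : Submodule (Weyl F n) (Fin l → Weyl F n)) : ℕ → Submodule F (Fin l → Weyl F n)
  | 0 => ⊥
  | (m + 1) => Ifil F n l I m

section GenRing
variable {R : Type*} [Ring R]

lemma mul_ofFn_pow {n : ℕ} (x : Fin n → R) (hc : ∀ a b, Commute (x a) (x b))
    (i : Fin n → ℕ) (v : Fin n) :
    x v * (List.ofFn fun k => x k ^ i k).prod
      = (List.ofFn fun k => x k ^ (i k + if k = v then 1 else 0)).prod := by
  induction n with
  | zero => exact absurd v.2 (by omega)
  | succ n ih =>
    simp only [List.ofFn_succ, List.prod_cons]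
    rcases Fin.eq_zero_or_eq_succ v with rfl | ⟨w, rfl⟩
    · simp only [Fin.succ_ne_zero, if_pos rfl, if_false, add_zero, if_true, eq_self_iff_true]
      rw [← mul_assoc, ← pow_succ']
    · simp only [if_neg (Fin.succ_ne_zero w).symm, Fin.succ_inj, add_zero]
      have h0 : Commute (x w.succ) (x 0 ^ i 0) := (hc _ _).pow_right _
      rw [← mul_assoc, h0.eq, mul_assoc,
        ih (fun k => x k.succ) (fun a b => hc _ _) (fun k => i k.succ) w]

lemma d_mul_pow (y d c : R) (hdy : d * y = y * d + c) (hcy : Commute c y) (a : ℕ) :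
    d * y ^ a = y ^ a * d + a • (c * y ^ (a - 1)) := by
  induction a with
  | zero => simp
  | succ a ih =>
    rw [pow_succ, ← mul_assoc, ih, add_mul, mul_assoc _ d y, hdy, mul_add, ← mul_assoc, ← pow_succ]
    rcases Nat.eq_zero_or_pos a with rfl | ha
    · simp
    · have h2 : a • (c * y ^ (a - 1)) * y = a • (c * y ^ a) := by
        rw [smul_mul_assoc, mul_assoc, ← pow_succ, Nat.sub_add_cancel ha]
      have h3 : y ^ a * c = c * y ^ a := ((hcy.pow_right a).eq).symm
      rw [h2, h3, Nat.add_sub_cancel, succ_nsmul]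
      abel

lemma d_mul_ofFn_pow {n : ℕ} (x : Fin n → R) (d c : R) (v : Fin n)
    (hdx : ∀ k, k ≠ v → d * x k = x k * d)
    (hdv : d * x v = x v * d + c)
    (hcx : ∀ k, Commute c (x k)) (i : Fin n → ℕ) :
    d * (List.ofFn fun k => x k ^ i k).prod
      = (List.ofFn fun k => x k ^ i k).prod * d
        + (i v) • (c * (List.ofFn fun k => x k ^ (i k - if k = v then 1 else 0)).prod) := by
  induction n with
  | zero => exact absurd v.2 (by omega)
  | succ n ih =>
    simp only [List.ofFn_succ, List.prod_cons]
    have hcP : ∀ (e : Fin n → ℕ) (y : Fin n → R), (∀ k, Commute c (y k)) →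
        Commute c (List.ofFn fun k : Fin n => y k ^ e k).prod := by
      intro e y hy
      refine Commute.list_prod_right _ _ fun z hz => ?_
      obtain ⟨k, rfl⟩ := List.mem_ofFn.mp hz
      exact (hy _).pow_right _
    rcases Fin.eq_zero_or_eq_succ v with rfl | ⟨w, rfl⟩
    · simp only [Fin.succ_ne_zero, if_pos rfl, if_false, Nat.sub_zero, if_true, eq_self_iff_true]
      have hdP : Commute d (List.ofFn fun k : Fin n => x k.succ ^ i k.succ).prod := by
        refine Commute.list_prod_right _ _ fun z hz => ?_
        obtain ⟨k, rfl⟩ := List.mem_ofFn.mp hz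
        exact (show Commute d (x k.succ) from hdx k.succ (Fin.succ_ne_zero k)).pow_right _
      calc d * (x 0 ^ i 0 * (List.ofFn fun k : Fin n => x k.succ ^ i k.succ).prod)
          = (d * x 0 ^ i 0) * (List.ofFn fun k : Fin n => x k.succ ^ i k.succ).prod := by
            rw [mul_assoc]
        _ = (x 0 ^ i 0 * d + i 0 • (c * x 0 ^ (i 0 - 1))) *
              (List.ofFn fun k : Fin n => x k.succ ^ i k.succ).prod := by
            rw [d_mul_pow (x 0) d c hdv (hcx 0)]
        _ = x 0 ^ i 0 * (d * (List.ofFn fun k : Fin n => x k.succ ^ i k.succ).prod)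
              + i 0 • (c * (x 0 ^ (i 0 - 1) *
                (List.ofFn fun k : Fin n => x k.succ ^ i k.succ).prod)) := by
            rw [add_mul, smul_mul_assoc, mul_assoc, mul_assoc]
        _ = x 0 ^ i 0 * (List.ofFn fun k : Fin n => x k.succ ^ i k.succ).prod * d
              + i 0 • (c * (x 0 ^ (i 0 - 1) *
                (List.ofFn fun k : Fin n => x k.succ ^ i k.succ).prod)) := by
            rw [hdP.eq, mul_assoc]
    · simp only [if_neg (Fin.succ_ne_zero w).symm, Fin.succ_inj, Nat.sub_zero]
      have hd0 : Commute d (x 0 ^ i 0) :=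
        (show Commute d (x 0) from hdx 0 (Fin.succ_ne_zero w).symm).pow_right _
      have hih := ih (fun k => x k.succ) w
        (fun k hk => hdx k.succ (by simpa [Fin.succ_inj] using hk)) hdv
        (fun k => hcx _) (fun k => i k.succ)
      have hc0 : Commute c (x 0 ^ i 0) := (hcx 0).pow_right _
      calc d * (x 0 ^ i 0 * (List.ofFn fun k : Fin n => x k.succ ^ i k.succ).prod)
          = x 0 ^ i 0 * (d * (List.ofFn fun k : Fin n => x k.succ ^ i k.succ).prod) := by
            rw [← mul_assoc, hd0.eq, mul_assoc]
        _ = x 0 ^ i 0 * ((List.ofFn fun k : Fin n => x k.succ ^ i k.succ).prod * d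
              + i w.succ • (c * (List.ofFn fun k : Fin n =>
                  x k.succ ^ (i k.succ - if k = w then 1 else 0)).prod)) := by rw [hih]
        _ = x 0 ^ i 0 * (List.ofFn fun k : Fin n => x k.succ ^ i k.succ).prod * d
              + i w.succ • (c * (x 0 ^ i 0 * (List.ofFn fun k : Fin n =>
                  x k.succ ^ (i k.succ - if k = w then 1 else 0)).prod)) := by
            rw [mul_add, ← mul_assoc, mul_smul_comm, ← mul_assoc, ← hc0.eq, mul_assoc, mul_assoc]
end GenRing

section HW
variable (F : Type) [Field F] (n : ℕ)

lemma hrel_eq {a b : FreeAlgebra F (HGen n)} (h : HRel F n a b) :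
    RingQuot.mkAlgHom F (HRel F n) a = RingQuot.mkAlgHom F (HRel F n) b :=
  RingQuot.mkAlgHom_rel F h

lemma hc_xx (v w : Fin n) : Commute (hXv F n v) (hXv F n w) := by
  have := hrel_eq F n (HRel.xx v w)
  simp only [map_mul] at this
  exact this

lemma hc_dd (v w : Fin n) : Commute (hDv F n v) (hDv F n w) := by
  have := hrel_eq F n (HRel.dd v w)
  simp only [map_mul] at this
  exact this

lemma hc_x0x (v : Fin n) : Commute (hX0 F n) (hXv F n v) := by
  have := hrel_eq F n (HRel.x0x v)
  simp only [map_mul] at this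
  exact this

lemma hc_x0d (v : Fin n) : Commute (hX0 F n) (hDv F n v) := by
  have := hrel_eq F n (HRel.x0d v)
  simp only [map_mul] at this
  exact this

lemma hc_xd (v w : Fin n) (h : v ≠ w) : Commute (hXv F n v) (hDv F n w) := by
  have := hrel_eq F n (HRel.xd v w h)
  simp only [map_mul] at this
  exact this

lemma hr_dx (v : Fin n) :
    hDv F n v * hXv F n v = hXv F n v * hDv F n v + hX0 F n * hX0 F n := by
  have := hrel_eq F n (HRel.dx v)
  simp only [map_mul, map_add] at this
  exact this

lemma hOfList_nil : hOfList F n [] = 1 := by simp [hOfList]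

lemma hOfList_cons (g : HGen n) (w : List (HGen n)) :
    hOfList F n (g :: w) = hGen F n g * hOfList F n w := by simp [hOfList]

lemma hOfList_append (w₁ w₂ : List (HGen n)) :
    hOfList F n (w₁ ++ w₂) = hOfList F n w₁ * hOfList F n w₂ := by
  simp [hOfList]

lemma hOfList_replicate (k : ℕ) (g : HGen n) :
    hOfList F n (List.replicate k g) = hGen F n g ^ k := by
  simp [hOfList, List.map_replicate, List.prod_replicate]

lemma hGen_X0 : hGen F n HGen.X0 = hX0 F n := rfl
lemma hGen_X (i : Fin n) : hGen F n (HGen.X i) = hXv F n i := rfl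
lemma hGen_D (i : Fin n) : hGen F n (HGen.D i) = hDv F n i := rfl

/-- The span of words of length exactly `d`. -/
noncomputable def Wd (d : ℕ) : Submodule F (HWeyl F n) :=
  Submodule.span F {x | ∃ w : List (HGen n), w.length = d ∧ x = hOfList F n w}

lemma word_mem_Wd {w : List (HGen n)} {d : ℕ} (h : w.length = d) :
    hOfList F n w ∈ Wd F n d :=
  Submodule.subset_span ⟨w, h, rfl⟩

lemma Wd_mul {x y : HWeyl F n} {d e : ℕ} (hx : x ∈ Wd F n d) (hy : y ∈ Wd F n e) :
    x * y ∈ Wd F n (d + e) := by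
  have : Wd F n d * Wd F n e ≤ Wd F n (d + e) := by
    rw [Wd, Wd, Submodule.span_mul_span]
    refine Submodule.span_le.2 ?_
    rintro z ⟨x, ⟨w₁, h₁, rfl⟩, y, ⟨w₂, h₂, rfl⟩, rfl⟩
    exact Submodule.subset_span ⟨w₁ ++ w₂, by simp [h₁, h₂], (hOfList_append F n w₁ w₂).symm⟩
  exact this (Submodule.mul_mem_mul hx hy)

lemma xp_word (i : Fin n → ℕ) :
    (List.ofFn fun k => hXv F n k ^ i k).prod
      = hOfList F n (List.ofFn fun k => List.replicate (i k) (HGen.X k)).flatten := by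
  unfold hOfList
  rw [List.map_flatten, List.prod_flatten, List.map_ofFn, List.map_ofFn]
  simp only [Function.comp_def, List.map_replicate, List.prod_replicate, hGen_X]

lemma dp_word (j : Fin n → ℕ) :
    (List.ofFn fun k => hDv F n k ^ j k).prod
      = hOfList F n (List.ofFn fun k => List.replicate (j k) (HGen.D k)).flatten := by
  unfold hOfList
  rw [List.map_flatten, List.prod_flatten, List.map_ofFn, List.map_ofFn]
  simp only [Function.comp_def, List.map_replicate, List.prod_replicate, hGen_D]

/-- `hMon` written as a word. -/
lemma hMon_word (i0 : ℕ) (i j : Fin n → ℕ) :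
    hMon F n i0 i j = hOfList F n
      (List.replicate i0 (HGen.X0 : HGen n)
        ++ (List.ofFn fun k => List.replicate (i k) (HGen.X k)).flatten
        ++ (List.ofFn fun k => List.replicate (j k) (HGen.D k)).flatten) := by
  rw [hOfList_append, hOfList_append, hOfList_replicate, hGen_X0, ← xp_word, ← dp_word]
  rfl

lemma hMon_mem_Wd (i0 : ℕ) (i j : Fin n → ℕ) :
    hMon F n i0 i j ∈ Wd F n (i0 + (∑ k, i k) + (∑ k, j k)) := by
  rw [hMon_word]
  refine word_mem_Wd F n ?_
  simp only [List.length_append, List.length_replicate, List.length_flatten, List.map_ofFn,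
    Function.comp_def, List.length_replicate, List.sum_ofFn]

lemma hComp_le_Wd (m : ℕ) : hComp F n m ≤ Wd F n m := by
  refine Submodule.span_le.2 ?_
  rintro x ⟨i0, i, j, hd, rfl⟩
  exact hd ▸ hMon_mem_Wd F n i0 i j

end HW

section HW2
variable (F : Type) [Field F] (n : ℕ)

lemma hX0_mul_hMon (i0 : ℕ) (i j : Fin n → ℕ) :
    hX0 F n * hMon F n i0 i j = hMon F n (i0 + 1) i j := by
  unfold hMon
  rw [← mul_assoc, ← mul_assoc, ← pow_succ']

lemma hXv_mul_hMon (v : Fin n) (i0 : ℕ) (i j : Fin n → ℕ) :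
    hXv F n v * hMon F n i0 i j
      = hMon F n i0 (fun k => i k + if k = v then 1 else 0) j := by
  unfold hMon
  have h0 : Commute (hXv F n v) (hX0 F n ^ i0) := ((hc_x0x F n v).symm).pow_right _
  rw [← mul_assoc, ← mul_assoc, h0.eq, mul_assoc (hX0 F n ^ i0),
    mul_ofFn_pow (fun k => hXv F n k) (fun a b => hc_xx F n a b) i v]

lemma hDv_mul_hMon (v : Fin n) (i0 : ℕ) (i j : Fin n → ℕ) :
    hDv F n v * hMon F n i0 i j
      = hMon F n i0 i (fun k => j k + if k = v then 1 else 0)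
        + (i v) • hMon F n (i0 + 2) (fun k => i k - if k = v then 1 else 0) j := by
  unfold hMon
  have h0 : Commute (hDv F n v) (hX0 F n ^ i0) := ((hc_x0d F n v).symm).pow_right _
  have hkey := d_mul_ofFn_pow (fun k => hXv F n k) (hDv F n v) (hX0 F n * hX0 F n) v
    (fun k hk => ((hc_xd F n k v hk).symm).eq)
    (hr_dx F n v)
    (fun k => ((hc_x0x F n k).mul_left (hc_x0x F n k)))
    i
  have hdp := mul_ofFn_pow (fun k => hDv F n k) (fun a b => hc_dd F n a b) j v
  calc hDv F n v * (hX0 F n ^ i0 * (List.ofFn fun k => hXv F n k ^ i k).prod *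
          (List.ofFn fun k => hDv F n k ^ j k).prod)
      = hX0 F n ^ i0 * (hDv F n v * (List.ofFn fun k => hXv F n k ^ i k).prod) *
          (List.ofFn fun k => hDv F n k ^ j k).prod := by
        rw [← mul_assoc, ← mul_assoc, h0.eq, mul_assoc (hX0 F n ^ i0)]
    _ = hX0 F n ^ i0 * ((List.ofFn fun k => hXv F n k ^ i k).prod * hDv F n v
          + (i v) • (hX0 F n * hX0 F n *
              (List.ofFn fun k => hXv F n k ^ (i k - if k = v then 1 else 0)).prod)) *
          (List.ofFn fun k => hDv F n k ^ j k).prod := by rw [hkey]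
    _ = hX0 F n ^ i0 * (List.ofFn fun k => hXv F n k ^ i k).prod *
          (hDv F n v * (List.ofFn fun k => hDv F n k ^ j k).prod)
        + (i v) • (hX0 F n ^ i0 * (hX0 F n * hX0 F n *
            (List.ofFn fun k => hXv F n k ^ (i k - if k = v then 1 else 0)).prod) *
          (List.ofFn fun k => hDv F n k ^ j k).prod) := by
        rw [mul_add, add_mul, mul_smul_comm, smul_mul_assoc]
        congr 1
        rw [mul_assoc, mul_assoc, mul_assoc]
    _ = hX0 F n ^ i0 * (List.ofFn fun k => hXv F n k ^ i k).prod *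
          (List.ofFn fun k => hDv F n k ^ (j k + if k = v then 1 else 0)).prod
        + (i v) • (hX0 F n ^ (i0 + 2) *
            (List.ofFn fun k => hXv F n k ^ (i k - if k = v then 1 else 0)).prod *
          (List.ofFn fun k => hDv F n k ^ j k).prod) := by
        rw [hdp]
        congr 3
        rw [← mul_assoc, ← mul_assoc, ← pow_succ, ← pow_succ]

lemma sum_add_ite (i : Fin n → ℕ) (v : Fin n) :
    (∑ k, (i k + if k = v then 1 else 0)) = (∑ k, i k) + 1 := by
  rw [Finset.sum_add_distrib, Finset.sum_ite_eq' Finset.univ v (fun _ => 1)]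
  simp

lemma sum_sub_ite (i : Fin n → ℕ) (v : Fin n) (hv : 1 ≤ i v) :
    (∑ k, (i k - if k = v then 1 else 0)) = (∑ k, i k) - 1 := by
  have hle : ∀ k ∈ Finset.univ, (if k = v then 1 else 0) ≤ i k := by
    intro k _
    by_cases h : k = v
    · subst h; simpa using hv
    · simp [h]
  rw [Finset.sum_tsub_distrib _ hle,
    Finset.sum_ite_eq' Finset.univ v (fun _ => 1)]
  simp

lemma hMon_mem_hComp (i0 : ℕ) (i j : Fin n → ℕ) :
    hMon F n i0 i j ∈ hComp F n (i0 + (∑ k, i k) + (∑ k, j k)) :=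
  Submodule.subset_span ⟨i0, i, j, rfl, rfl⟩

lemma gen_mul_hComp (g : HGen n) {m : ℕ} {z : HWeyl F n} (hz : z ∈ hComp F n m) :
    hGen F n g * z ∈ hComp F n (m + 1) := by
  induction hz using Submodule.span_induction with
  | mem x hx =>
    obtain ⟨i0, i, j, hd, rfl⟩ := hx
    cases g with
    | X0 =>
      rw [hGen_X0, hX0_mul_hMon]
      have := hMon_mem_hComp F n (i0 + 1) i j
      rwa [show i0 + 1 + (∑ k, i k) + (∑ k, j k) = m + 1 by omega] at this
    | X v =>
      rw [hGen_X, hXv_mul_hMon]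
      have := hMon_mem_hComp F n i0 (fun k => i k + if k = v then 1 else 0) j
      rwa [sum_add_ite, show i0 + ((∑ k, i k) + 1) + (∑ k, j k) = m + 1 by omega] at this
    | D v =>
      rw [hGen_D, hDv_mul_hMon]
      refine Submodule.add_mem _ ?_ ?_
      · have := hMon_mem_hComp F n i0 i (fun k => j k + if k = v then 1 else 0)
        rwa [sum_add_ite, show i0 + (∑ k, i k) + ((∑ k, j k) + 1) = m + 1 by omega] at this
      · rcases Nat.eq_zero_or_pos (i v) with h0 | h0
        · rw [h0, zero_smul]; exact Submodule.zero_mem _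
        · refine nsmul_mem ?_ _
          have := hMon_mem_hComp F n (i0 + 2) (fun k => i k - if k = v then 1 else 0) j
          have hs : (∑ k, i k) ≥ 1 := le_trans h0 (Finset.single_le_sum
            (f := fun k => i k) (fun _ _ => Nat.zero_le _) (Finset.mem_univ v))
          rwa [sum_sub_ite n i v h0,
            show i0 + 2 + ((∑ k, i k) - 1) + (∑ k, j k) = m + 1 by omega] at this
  | zero => rw [mul_zero]; exact Submodule.zero_mem _
  | add x y _ _ hx hy => rw [mul_add]; exact Submodule.add_mem _ hx hy
  | smul c x _ hx => rw [mul_smul_comm]; exact Submodule.smul_mem _ c hx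

lemma one_mem_hComp : (1 : HWeyl F n) ∈ hComp F n 0 := by
  have := hMon_mem_hComp F n 0 (fun _ => 0) (fun _ => 0)
  simpa [hMon] using this

lemma word_mem_hComp (w : List (HGen n)) : hOfList F n w ∈ hComp F n w.length := by
  induction w with
  | nil => rw [hOfList_nil]; exact one_mem_hComp F n
  | cons g w ih =>
    rw [hOfList_cons]
    have := gen_mul_hComp F n g ih
    rwa [show w.length + 1 = (g :: w).length from rfl] at this

lemma hComp_eq_Wd (m : ℕ) : hComp F n m = Wd F n m := by
  refine le_antisymm (hComp_le_Wd F n m) ?_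
  refine Submodule.span_le.2 ?_
  rintro x ⟨w, hw, rfl⟩
  exact hw ▸ word_mem_hComp F n w

lemma hComp_mul {x y : HWeyl F n} {d e : ℕ} (hx : x ∈ hComp F n d)
    (hy : y ∈ hComp F n e) : x * y ∈ hComp F n (d + e) := by
  rw [hComp_eq_Wd] at hx hy ⊢
  exact Wd_mul F n hx hy

lemma hGen_mem_hComp1 (g : HGen n) : hGen F n g ∈ hComp F n 1 := by
  have := word_mem_hComp F n [g]
  simpa [hOfList_cons, hOfList_nil] using this

lemma hX0_pow_mem (k : ℕ) : hX0 F n ^ k ∈ hComp F n k := by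
  have := word_mem_hComp F n (List.replicate k (HGen.X0 : HGen n))
  rwa [hOfList_replicate, hGen_X0, List.length_replicate] at this

end HW2

section PhiSec
variable (F : Type) [Field F] (n : ℕ)
open Polynomial

lemma CX_mul_CXpow {R : Type*} [Ring R] (a b : R) (k : ℕ) :
    (C a * X) * (C b * X ^ k) = C (a * b) * X ^ (k + 1) := by
  rw [mul_assoc, ← mul_assoc X (C b), X_mul_C, mul_assoc (C b), ← pow_succ',
    ← mul_assoc, ← C_mul]

lemma CX_mul_CX {R : Type*} [Ring R] (a b : R) :
    (C a * X) * (C b * X) = C (a * b) * X ^ 2 := by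
  have := CX_mul_CXpow a b 1
  simpa using this

noncomputable def PhiAux : FreeAlgebra F (HGen n) →ₐ[F] Polynomial (HWeyl F n) :=
  FreeAlgebra.lift F (fun g => C (hGen F n g) * X)

lemma PhiAux_rel {a b : FreeAlgebra F (HGen n)} (h : HRel F n a b) :
    PhiAux F n a = PhiAux F n b := by
  induction h with
  | xx v w =>
    simp only [PhiAux, map_mul, FreeAlgebra.lift_ι_apply, CX_mul_CX]
    simp only [hGen_X, hGen_D, hGen_X0]
    rw [← C_mul, ← C_mul, (hc_xx F n v w).eq]
  | dd v w =>
    simp only [PhiAux, map_mul, FreeAlgebra.lift_ι_apply, CX_mul_CX]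
    simp only [hGen_X, hGen_D, hGen_X0]
    rw [← C_mul, ← C_mul, (hc_dd F n v w).eq]
  | dx v =>
    simp only [PhiAux, map_mul, map_add, FreeAlgebra.lift_ι_apply, CX_mul_CX]
    simp only [hGen_X, hGen_D, hGen_X0]
    rw [← C_mul, ← C_mul, ← C_mul, hr_dx, C_add, add_mul]
  | xd v w hvw =>
    simp only [PhiAux, map_mul, FreeAlgebra.lift_ι_apply, CX_mul_CX]
    simp only [hGen_X, hGen_D, hGen_X0]
    rw [← C_mul, ← C_mul, (hc_xd F n v w hvw).eq]
  | x0x v =>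
    simp only [PhiAux, map_mul, FreeAlgebra.lift_ι_apply, CX_mul_CX]
    simp only [hGen_X, hGen_D, hGen_X0]
    rw [← C_mul, ← C_mul, (hc_x0x F n v).eq]
  | x0d v =>
    simp only [PhiAux, map_mul, FreeAlgebra.lift_ι_apply, CX_mul_CX]
    simp only [hGen_X, hGen_D, hGen_X0]
    rw [← C_mul, ← C_mul, (hc_x0d F n v).eq]

noncomputable def Phi : HWeyl F n →ₐ[F] Polynomial (HWeyl F n) :=
  RingQuot.liftAlgHom F ⟨PhiAux F n, fun _ _ h => PhiAux_rel F n h⟩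

lemma Phi_hGen (g : HGen n) : Phi F n (hGen F n g) = C (hGen F n g) * X := by
  show Phi F n (RingQuot.mkAlgHom F (HRel F n) (FreeAlgebra.ι F g)) = _
  rw [Phi, RingQuot.liftAlgHom_mkAlgHom_apply]
  simp [PhiAux, FreeAlgebra.lift_ι_apply]

lemma Phi_word (w : List (HGen n)) :
    Phi F n (hOfList F n w) = C (hOfList F n w) * X ^ w.length := by
  induction w with
  | nil => simp [hOfList_nil]
  | cons g w ih =>
    rw [hOfList_cons, map_mul, Phi_hGen, ih, CX_mul_CXpow, ← hOfList_cons]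
    rfl

lemma Phi_hComp {m : ℕ} {z : HWeyl F n} (hz : z ∈ hComp F n m) :
    Phi F n z = C z * X ^ m := by
  rw [hComp_eq_Wd] at hz
  induction hz using Submodule.span_induction with
  | mem x hx => obtain ⟨w, hw, rfl⟩ := hx; rw [Phi_word, hw]
  | zero => simp
  | add x y _ _ hx hy => rw [map_add, hx, hy, C_add, add_mul]
  | smul c x _ hx => rw [map_smul, hx, ← smul_mul_assoc, Polynomial.smul_C]

/-- The projection onto the `m`-th homogeneous component. -/
noncomputable def pim (m : ℕ) (z : HWeyl F n) : HWeyl F n := (Phi F n z).coeff m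

lemma pim_hComp {m : ℕ} {z : HWeyl F n} (hz : z ∈ hComp F n m) : pim F n m z = z := by
  rw [pim, Phi_hComp F n hz, coeff_C_mul, coeff_X_pow, if_pos rfl, mul_one]

lemma pim_mem (z : HWeyl F n) (m : ℕ) : pim F n m z ∈ hComp F n m := by
  obtain ⟨y, rfl⟩ := RingQuot.mkAlgHom_surjective F (HRel F n) z
  induction y using FreeAlgebra.induction generalizing m with
  | grade0 r =>
    rw [pim, AlgHom.commutes, AlgHom.commutes, Polynomial.algebraMap_apply, coeff_C]
    split
    · rw [Algebra.algebraMap_eq_smul_one]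
      subst ‹m = 0›
      exact Submodule.smul_mem _ _ (one_mem_hComp F n)
    · exact Submodule.zero_mem _
  | grade1 g =>
    rw [pim]
    have : RingQuot.mkAlgHom F (HRel F n) (FreeAlgebra.ι F g) = hGen F n g := rfl
    rw [this, Phi_hGen, coeff_C_mul, ← pow_one (X : Polynomial (HWeyl F n)), coeff_X_pow]
    split
    · subst ‹m = 1›
      rw [mul_one]
      exact hGen_mem_hComp1 F n g
    · rw [mul_zero]; exact Submodule.zero_mem _
  | mul x y hx hy =>
    rw [pim, map_mul, map_mul, coeff_mul]
    refine Submodule.sum_mem _ fun p hp => ?_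
    have := hComp_mul F n (hx p.1) (hy p.2)
    rwa [Finset.HasAntidiagonal.mem_antidiagonal.mp hp] at this
  | add x y hx hy =>
    rw [pim, map_add, map_add, coeff_add]
    exact Submodule.add_mem _ (hx m) (hy m)

lemma pim_mul_right_le {d m : ℕ} {y : HWeyl F n} (hy : y ∈ hComp F n d) (hdm : d ≤ m)
    (x : HWeyl F n) : pim F n m (x * y) = pim F n (m - d) x * y := by
  rw [pim, pim, map_mul, Phi_hComp F n hy, ← mul_assoc, coeff_mul_X_pow', if_pos hdm,
    coeff_mul_C]

lemma pim_mul_right_lt {d m : ℕ} {y : HWeyl F n} (hy : y ∈ hComp F n d) (hdm : m < d)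
    (x : HWeyl F n) : pim F n m (x * y) = 0 := by
  rw [pim, map_mul, Phi_hComp F n hy, ← mul_assoc, coeff_mul_X_pow', if_neg (by omega)]

lemma pim_sum {ι : Type*} (s : Finset ι) (f : ι → HWeyl F n) (m : ℕ) :
    pim F n m (∑ v ∈ s, f v) = ∑ v ∈ s, pim F n m (f v) := by
  simp only [pim, map_sum, finset_sum_coeff]

end PhiSec

section WSide
variable (F : Type) [Field F] (n : ℕ)

lemma wOfList_nil : wOfList F n [] = 1 := by simp [wOfList]

lemma wOfList_cons (g : WeylGen n) (w : List (WeylGen n)) :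
    wOfList F n (g :: w) = wGen F n g * wOfList F n w := by simp [wOfList]

lemma wOfList_append (w₁ w₂ : List (WeylGen n)) :
    wOfList F n (w₁ ++ w₂) = wOfList F n w₁ * wOfList F n w₂ := by
  simp [wOfList]

lemma wOfList_replicate (k : ℕ) (g : WeylGen n) :
    wOfList F n (List.replicate k g) = wGen F n g ^ k := by
  simp [wOfList, List.map_replicate, List.prod_replicate]

lemma wGen_X (i : Fin n) : wGen F n (WeylGen.X i) = wX F n i := rfl
lemma wGen_D (i : Fin n) : wGen F n (WeylGen.D i) = wD F n i := rfl

lemma wFil_mono {m m' : ℕ} (h : m ≤ m') : wFil F n m ≤ wFil F n m' := by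
  refine Submodule.span_mono ?_
  rintro x ⟨w, hw, rfl⟩
  exact ⟨w, le_trans hw h, rfl⟩

lemma word_mem_wFil {w : List (WeylGen n)} {m : ℕ} (h : w.length ≤ m) :
    wOfList F n w ∈ wFil F n m :=
  Submodule.subset_span ⟨w, h, rfl⟩

lemma one_mem_wFil (m : ℕ) : (1 : Weyl F n) ∈ wFil F n m :=
  wOfList_nil F n ▸ word_mem_wFil F n (by simp)

lemma wFil_mul {x y : Weyl F n} {d e : ℕ} (hx : x ∈ wFil F n d) (hy : y ∈ wFil F n e) :
    x * y ∈ wFil F n (d + e) := by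
  have : wFil F n d * wFil F n e ≤ wFil F n (d + e) := by
    rw [wFil, wFil, Submodule.span_mul_span]
    refine Submodule.span_le.2 ?_
    rintro z ⟨x, ⟨w₁, h₁, rfl⟩, y, ⟨w₂, h₂, rfl⟩, rfl⟩
    exact Submodule.subset_span ⟨w₁ ++ w₂, by simp; omega, (wOfList_append F n w₁ w₂).symm⟩
  exact this (Submodule.mul_mem_mul hx hy)

lemma exists_mem_wFil (z : Weyl F n) : ∃ m, z ∈ wFil F n m := by
  obtain ⟨y, rfl⟩ := RingQuot.mkAlgHom_surjective F (WeylRel F n) z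
  induction y using FreeAlgebra.induction with
  | grade0 r =>
    refine ⟨0, ?_⟩
    rw [AlgHom.commutes, Algebra.algebraMap_eq_smul_one]
    exact Submodule.smul_mem _ _ (one_mem_wFil F n 0)
  | grade1 g =>
    refine ⟨1, ?_⟩
    have : RingQuot.mkAlgHom F (WeylRel F n) (FreeAlgebra.ι F g) = wGen F n g := rfl
    rw [this, show wGen F n g = wOfList F n [g] by simp [wOfList_cons, wOfList_nil]]
    exact word_mem_wFil F n (by simp)
  | mul x y hx hy =>
    obtain ⟨d, hd⟩ := hx
    obtain ⟨e, he⟩ := hy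
    exact ⟨d + e, by rw [map_mul]; exact wFil_mul F n hd he⟩
  | add x y hx hy =>
    obtain ⟨d, hd⟩ := hx
    obtain ⟨e, he⟩ := hy
    refine ⟨max d e, ?_⟩
    rw [map_add]
    exact Submodule.add_mem _ (wFil_mono F n (le_max_left d e) hd)
      (wFil_mono F n (le_max_right d e) he)

lemma mem_wFil_wDeg (z : Weyl F n) : z ∈ wFil F n (wDeg F n z) :=
  Nat.sInf_mem (exists_mem_wFil F n z)

lemma wDeg_le {z : Weyl F n} {m : ℕ} (h : z ∈ wFil F n m) : wDeg F n z ≤ m :=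
  Nat.sInf_le h

/-- Extraction of a representation from membership in `wFil`. -/
lemma exists_rep {z : Weyl F n} {m : ℕ} (h : z ∈ wFil F n m) :
    ∃ L : List (F × List (WeylGen n)), wRep F n L = z ∧ ∀ t ∈ L, t.2.length ≤ m := by
  rw [wFil] at h
  obtain ⟨c, hsupp, hsum⟩ := Submodule.mem_span_set.mp h
  have hword : ∀ x ∈ c.support, ∃ w : List (WeylGen n), w.length ≤ m ∧ x = wOfList F n w := by
    intro x hx
    exact hsupp hx
  choose wrd hw1 hw2 using hword
  classical
  refine ⟨c.support.attach.toList.map fun x => (c x.1, wrd x.1 x.2), ?_, ?_⟩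
  · rw [wRep, List.map_map]
    rw [show ((fun t : F × List (WeylGen n) => t.1 • wOfList F n t.2) ∘
        fun x : {x // x ∈ c.support} => (c x.1, wrd x.1 x.2))
        = fun x : {x // x ∈ c.support} => c x.1 • x.1 by
      funext x
      simp only [Function.comp_apply]
      rw [← hw2 x.1 x.2]]
    rw [Finset.sum_map_toList]
    rw [← hsum, Finsupp.sum]
    exact Finset.sum_attach c.support (fun a => c a • a)
  · intro t ht
    obtain ⟨x, -, rfl⟩ := List.mem_map.mp ht
    exact hw1 x.1 x.2

end WSide

section ALink
variable (F : Type) [Field F] (n : ℕ)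

lemma a_hGen_emb (a : HWeyl F n →ₐ[F] Weyl F n)
    (haX : ∀ i, a (hXv F n i) = wX F n i)
    (haD : ∀ i, a (hDv F n i) = wD F n i) (g : WeylGen n) :
    a (hGen F n (embGen n g)) = wGen F n g := by
  cases g with
  | X i => rw [show embGen n (WeylGen.X i) = HGen.X i from rfl, hGen_X, haX, wGen_X]
  | D i => rw [show embGen n (WeylGen.D i) = HGen.D i from rfl, hGen_D, haD, wGen_D]

lemma a_hOfList_emb (a : HWeyl F n →ₐ[F] Weyl F n)
    (haX : ∀ i, a (hXv F n i) = wX F n i)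
    (haD : ∀ i, a (hDv F n i) = wD F n i) (w : List (WeylGen n)) :
    a (hOfList F n (w.map (embGen n))) = wOfList F n w := by
  induction w with
  | nil => rw [List.map_nil, hOfList_nil, map_one, wOfList_nil]
  | cons g w ih =>
    rw [List.map_cons, hOfList_cons, map_mul, a_hGen_emb F n a haX haD, ih, wOfList_cons]

lemma a_hX0_pow (a : HWeyl F n →ₐ[F] Weyl F n) (ha0 : a (hX0 F n) = 1) (k : ℕ) :
    a (hX0 F n ^ k) = 1 := by rw [map_pow, ha0, one_pow]

lemma a_hRep (a : HWeyl F n →ₐ[F] Weyl F n) (ha0 : a (hX0 F n) = 1)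
    (haX : ∀ i, a (hXv F n i) = wX F n i)
    (haD : ∀ i, a (hDv F n i) = wD F n i)
    (L : List (F × List (WeylGen n))) (d : ℕ) :
    a (hRep F n L d) = wRep F n L := by
  rw [hRep, wRep, map_list_sum, List.map_map]
  congr 1
  refine List.map_congr_left fun t ht => ?_
  simp only [Function.comp_apply]
  rw [map_smul, map_mul, a_hX0_pow F n a ha0, one_mul,
    a_hOfList_emb F n a haX haD]

lemma a_hfun (a : HWeyl F n →ₐ[F] Weyl F n) (ha0 : a (hX0 F n) = 1)
    (haX : ∀ i, a (hXv F n i) = wX F n i)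
    (haD : ∀ i, a (hDv F n i) = wD F n i)
    (hfun : Weyl F n → HWeyl F n) (hh : IsHomogenization F n hfun) (z : Weyl F n) :
    a (hfun z) = z := by
  obtain ⟨L, hL1, hL2⟩ := exists_rep F n (mem_wFil_wDeg F n z)
  rw [hh z L hL1 hL2, a_hRep F n a ha0 haX haD, hL1]

lemma hfun_mem_hComp (hfun : Weyl F n → HWeyl F n) (hh : IsHomogenization F n hfun)
    (z : Weyl F n) : hfun z ∈ hComp F n (wDeg F n z) := by
  obtain ⟨L, hL1, hL2⟩ := exists_rep F n (mem_wFil_wDeg F n z)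
  rw [hh z L hL1 hL2, hRep]
  refine list_sum_mem fun x hx => ?_
  obtain ⟨t, ht, rfl⟩ := List.mem_map.mp hx
  refine Submodule.smul_mem _ _ ?_
  have h1 : hX0 F n ^ (wDeg F n z - t.2.length) ∈ hComp F n (wDeg F n z - t.2.length) :=
    hX0_pow_mem F n _
  have h2 : hOfList F n (t.2.map (embGen n)) ∈ hComp F n t.2.length := by
    have := word_mem_hComp F n (t.2.map (embGen n))
    rwa [List.length_map] at this
  have := hComp_mul F n h1 h2
  rwa [Nat.sub_add_cancel (hL2 t ht)] at this

lemma wMon_word (i j : Fin n → ℕ) :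
    wMon F n i j = wOfList F n
      ((List.ofFn fun k => List.replicate (i k) (WeylGen.X k)).flatten
        ++ (List.ofFn fun k => List.replicate (j k) (WeylGen.D k)).flatten) := by
  rw [wOfList_append]
  unfold wMon wOfList
  congr 1
  · rw [List.map_flatten, List.prod_flatten, List.map_ofFn, List.map_ofFn]
    simp only [Function.comp_def, List.map_replicate, List.prod_replicate, wGen_X]
  · rw [List.map_flatten, List.prod_flatten, List.map_ofFn, List.map_ofFn]
    simp only [Function.comp_def, List.map_replicate, List.prod_replicate, wGen_D]

lemma wMon_mem_wFil {k : ℕ} (i j : Fin n → ℕ) (h : (∑ v, i v) + (∑ v, j v) ≤ k) :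
    wMon F n i j ∈ wFil F n k := by
  rw [wMon_word]
  refine word_mem_wFil F n ?_
  simp only [List.length_append, List.length_flatten, List.map_ofFn, Function.comp_def,
    List.length_replicate, List.sum_ofFn]
  exact h

lemma a_hMon (a : HWeyl F n →ₐ[F] Weyl F n) (ha0 : a (hX0 F n) = 1)
    (haX : ∀ i, a (hXv F n i) = wX F n i)
    (haD : ∀ i, a (hDv F n i) = wD F n i) (i0 : ℕ) (i j : Fin n → ℕ) :
    a (hMon F n i0 i j) = wMon F n i j := by
  unfold hMon wMon
  rw [map_mul, map_mul, a_hX0_pow F n a ha0, one_mul, map_list_prod, map_list_prod,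
    List.map_ofFn, List.map_ofFn]
  have h1 : ⇑a ∘ (fun k => hXv F n k ^ i k) = fun k => wX F n k ^ i k := by
    funext k
    simp only [Function.comp_apply, map_pow, haX]
  have h2 : ⇑a ∘ (fun k => hDv F n k ^ j k) = fun k => wD F n k ^ j k := by
    funext k
    simp only [Function.comp_apply, map_pow, haD]
  rw [h1, h2]

lemma a_hComp_mem (a : HWeyl F n →ₐ[F] Weyl F n) (ha0 : a (hX0 F n) = 1)
    (haX : ∀ i, a (hXv F n i) = wX F n i)
    (haD : ∀ i, a (hDv F n i) = wD F n i) {k : ℕ} {z : HWeyl F n}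
    (hz : z ∈ hComp F n k) : a z ∈ wFil F n k := by
  induction hz using Submodule.span_induction with
  | mem x hx =>
    obtain ⟨i0, i, j, hd, rfl⟩ := hx
    rw [a_hMon F n a ha0 haX haD]
    exact wMon_mem_wFil F n i j (by omega)
  | zero => rw [map_zero]; exact Submodule.zero_mem _
  | add x y _ _ hx hy => rw [map_add]; exact Submodule.add_mem _ hx hy
  | smul c x _ hx => rw [map_smul]; exact Submodule.smul_mem _ c hx

end ALink

/-- If `b_1,…,b_s` are homogeneous generators of the `hA`-module `hI`,
then `gr(a(b_1)),…,gr(a(b_s))` generate the `gr(A)`-module `gr(I)`: every `z ∈ I_m`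
agrees modulo `I_{m-1}` with a combination `Σ c_v • a(b_v)` with
`deg c_v ≤ m - deg a(b_v)`. -/
theorem graded_generators_from_homogenization (F : Type) [Field F] [CharZero F]
    (n l s : ℕ) (I : Submodule (Weyl F n) (Fin l → Weyl F n))
    (hfun : Weyl F n → HWeyl F n) (hh : IsHomogenization F n hfun)
    (a : HWeyl F n →ₐ[F] Weyl F n)
    (ha0 : a (hX0 F n) = 1)
    (haX : ∀ i, a (hXv F n i) = wX F n i)
    (haD : ∀ i, a (hDv F n i) = wD F n i)
    (b : Fin s → (Fin l → HWeyl F n))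
    (hbhom : ∀ v, ∃ m : ℕ, b v ∈ hPil F n l m)
    (hbgen : (Submodule.span (HWeyl F n) (Set.range b)).restrictScalars F =
      hImod F n l hfun I) :
    ∀ m : ℕ, ∀ z ∈ Ifil F n l I m,
      ∃ c : Fin s → Weyl F n,
        (∀ v, c v = 0 ∨
          (wDegVec F n l (aLin F n l a (b v)) ≤ m ∧
            c v ∈ wFil F n (m - wDegVec F n l (aLin F n l a (b v))))) ∧
        z - (∑ v, c v • aLin F n l a (b v)) ∈ IfilPrev F n l I m := by

  intro m z hz
  classical
  rw [Ifil, Submodule.mem_inf] at hz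
  obtain ⟨hzI, hzA⟩ := hz
  have hzI' : z ∈ I := hzI
  have hzc : ∀ i, z i ∈ wFil F n m := fun i =>
    (Submodule.mem_pi.mp hzA) i (Set.mem_univ i)
  set dz := wDegVec F n l z with hdz
  have hdzi : ∀ i, wDeg F n (z i) ≤ dz := by
    intro i
    rw [hdz, wDegVec]
    exact Finset.le_sup (f := fun i => wDeg F n (z i)) (Finset.mem_univ i)
  have hdzm : dz ≤ m := by
    rw [hdz, wDegVec]
    exact Finset.sup_le fun i _ => wDeg_le F n (hzc i)
  choose d hd using hbhom
  have hbv : ∀ v i, b v i ∈ hComp F n (d v) := fun v i =>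
    (Submodule.mem_pi.mp (hd v)) i (Set.mem_univ i)
  set W : Fin l → HWeyl F n := (hX0 F n ^ (m - dz)) • hVec F n l hfun z with hW
  have hWspan : W ∈ Submodule.span (HWeyl F n) (Set.range b) := by
    have h1 : hVec F n l hfun z ∈ hImod F n l hfun I :=
      Submodule.subset_span ⟨z, hzI', rfl⟩
    rw [← hbgen] at h1
    exact Submodule.smul_mem _ _ (Submodule.restrictScalars_mem F _ _ |>.mp h1)
  obtain ⟨e, he⟩ := (Submodule.mem_span_range_iff_exists_fun (HWeyl F n)).mp hWspan
  have hWc : ∀ i, W i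
      = hX0 F n ^ (m - dz) * (hfun (z i) * hX0 F n ^ (dz - wDeg F n (z i))) := by
    intro i
    rw [hW, Pi.smul_apply, smul_eq_mul, hVec]
  have hWm : ∀ i, W i ∈ hComp F n m := by
    intro i
    rw [hWc]
    have h1 := hX0_pow_mem F n (m - dz)
    have h2 := hfun_mem_hComp F n hfun hh (z i)
    have h3 := hX0_pow_mem F n (dz - wDeg F n (z i))
    have h4 := hComp_mul F n h1 (hComp_mul F n h2 h3)
    rwa [show (m - dz) + (wDeg F n (z i) + (dz - wDeg F n (z i))) = m by
      have := hdzi i; omega] at h4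
  set e' : Fin s → HWeyl F n :=
    fun v => if d v ≤ m then pim F n (m - d v) (e v) else 0 with he'
  have hsum : ∀ i, (∑ v, e' v * b v i) = W i := by
    intro i
    have h0 : (∑ v, e v • b v) i = W i := by rw [he]
    rw [Finset.sum_apply] at h0
    simp only [Pi.smul_apply, smul_eq_mul] at h0
    calc ∑ v, e' v * b v i
        = ∑ v, pim F n m (e v * b v i) := by
          refine Finset.sum_congr rfl fun v _ => ?_
          by_cases hv : d v ≤ m
          · rw [he']
            simp only [if_pos hv]
            rw [← pim_mul_right_le F n (hbv v i) hv]
          · rw [he']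
            simp only [if_neg hv]
            rw [zero_mul, pim_mul_right_lt F n (hbv v i) (by omega)]
      _ = pim F n m (∑ v, e v * b v i) := (pim_sum F n Finset.univ _ m).symm
      _ = pim F n m (W i) := by rw [h0]
      _ = W i := pim_hComp F n (hWm i)
  have haLin : ∀ v i, aLin F n l a (b v) i = a (b v i) := fun v i => rfl
  refine ⟨fun v => a (e' v), ?_, ?_⟩
  · intro v
    by_cases hv : d v ≤ m
    · right
      have hav : ∀ i, a (b v i) ∈ wFil F n (d v) := fun i =>
        a_hComp_mem F n a ha0 haX haD (hbv v i)
      have hdav : wDegVec F n l (aLin F n l a (b v)) ≤ d v := by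
        rw [wDegVec]
        refine Finset.sup_le fun i _ => ?_
        rw [haLin]
        exact wDeg_le F n (hav i)
      refine ⟨le_trans hdav hv, ?_⟩
      have hc : a (e' v) ∈ wFil F n (m - d v) := by
        rw [he']
        simp only [if_pos hv]
        exact a_hComp_mem F n a ha0 haX haD (pim_mem F n (e v) (m - d v))
      exact wFil_mono F n (by omega) hc
    · left
      rw [he']
      simp only [if_neg hv]
      exact map_zero a
  · have hzW : ∀ i, z i = a (W i) := by
      intro i
      rw [hWc, map_mul, map_mul, a_hX0_pow F n a ha0, a_hX0_pow F n a ha0,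
        a_hfun F n a ha0 haX haD hfun hh, one_mul, mul_one]
    have hzero : z - (∑ v, (fun v => a (e' v)) v • aLin F n l a (b v)) = 0 := by
      funext i
      rw [Pi.sub_apply, Pi.zero_apply, sub_eq_zero, Finset.sum_apply]
      calc z i = a (W i) := hzW i
        _ = a (∑ v, e' v * b v i) := by rw [hsum]
        _ = ∑ v, a (e' v) * a (b v i) := by rw [map_sum]; simp only [map_mul]
        _ = ∑ v, (fun v => a (e' v)) v • aLin F n l a (b v) i := by
            refine Finset.sum_congr rfl fun v _ => ?_
            rw [haLin, smul_eq_mul]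
        _ = ∑ v, ((fun v => a (e' v)) v • aLin F n l a (b v)) i := by
            refine Finset.sum_congr rfl fun v _ => ?_
            rw [Pi.smul_apply]
    rw [hzero]
    cases m with
    | zero => exact Submodule.zero_mem _
    | succ m' => exact Submodule.zero_mem _
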